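/- Let U be a unitary on ℂ²⊗ℂ², let Φ^U be the Choi state on (R_A⊗A)⊗(R_B⊗B) of the two-qubit unitary channel ρ ↦ UρUᴴ, and let M := tr_{R_AA} Φ^U be its reduced state on R_B⊗B. Then the positive semidefinite square root √M satisfies tr_{R_B}(√M) = (tr√M/2)·1₂ and tr_B(√M) = (tr√M/2)·1₂; equivalently, √M/tr(√M) is the Choi state of a unital qubit channel. -/

import Mathlib

open scoped ComplexOrder Kronecker
open Matrix

noncomputable section

/-- Square complex matrices indexed by `ι`. -/
abbrev Mat (ι : Type) : Type := Matrix ι ι ℂ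

/-- A quantum state: a positive semidefinite matrix of trace one. -/
def IsState {ι : Type} [Fintype ι] (ρ : Mat ι) : Prop :=
  ρ.PosSemidef ∧ ρ.trace = 1

/-- Max-relative entropy `D_∞(ρ‖σ) = log₂ inf {λ ≥ 0 : λ•σ − ρ ⪰ 0}` as an extended real;
it is `+∞` (`sInf ∅ = ⊤`) when no such `λ` exists. -/
def Dmax {ι : Type} [Fintype ι] (ρ σ : Mat ι) : EReal :=
  sInf {x : EReal | ∃ l : ℝ, 0 ≤ l ∧ ((l : ℂ) • σ - ρ).PosSemidef ∧
    x = ((Real.logb 2 l : ℝ) : EReal)}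

/-- Partial trace over the first tensor factor. -/
def trFst {ιA ιB : Type} [Fintype ιA] (ρ : Matrix (ιA × ιB) (ιA × ιB) ℂ) : Mat ιB :=
  Matrix.of fun i j => ∑ k : ιA, ρ (k, i) (k, j)

/-- Partial trace over the second tensor factor. -/
def trSnd {ιA ιB : Type} [Fintype ιB] (ρ : Matrix (ιA × ιB) (ιA × ιB) ℂ) : Mat ιA :=
  Matrix.of fun i j => ∑ k : ιB, ρ (i, k) (j, k)

/-- Conditional min-entropy `S_∞(A|B)_ρ := −inf over states σ on B of D_∞(ρ‖1_A⊗σ)`. -/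
def condMin {ιA ιB : Type} [Fintype ιA] [DecidableEq ιA] [Fintype ιB]
    (ρ : Matrix (ιA × ιB) (ιA × ιB) ℂ) : EReal :=
  -(⨅ σ : {σ : Mat ιB // IsState σ}, Dmax ρ ((1 : Mat ιA) ⊗ₖ σ.1))

/-- `S↓_∞(A|B)_ρ := −D_∞(ρ‖1_A⊗ρ_B)` with `ρ_B = tr_A ρ`. -/
def condMinDown {ιA ιB : Type} [Fintype ιA] [DecidableEq ιA] [Fintype ιB]
    (ρ : Matrix (ιA × ιB) (ιA × ιB) ℂ) : EReal :=
  -(Dmax ρ ((1 : Mat ιA) ⊗ₖ trFst ρ))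

/-- The (unnormalized) Choi matrix of a linear map of matrices. -/
def choiMatrix {ι κ : Type} [DecidableEq ι] (L : Mat ι →ₗ[ℂ] Mat κ) :
    Matrix (ι × κ) (ι × κ) ℂ :=
  Matrix.of fun p q => L (Matrix.single p.1 q.1 1) p.2 q.2

/-- A quantum channel: a linear map that is completely positive (positive semidefinite Choi
matrix) and trace preserving. -/
def IsChannel {ι κ : Type} [Fintype ι] [DecidableEq ι] [Fintype κ]
    (L : Mat ι →ₗ[ℂ] Mat κ) : Prop :=
  (choiMatrix L).PosSemidef ∧ ∀ X : Mat ι, (L X).trace = X.trace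

/-- The Choi state `Φ^L = (id⊗L)(Φ_d)` of a linear map of matrices. -/
def choiState {ι κ : Type} [Fintype ι] [DecidableEq ι] (L : Mat ι →ₗ[ℂ] Mat κ) :
    Matrix (ι × κ) (ι × κ) ℂ :=
  ((Fintype.card ι : ℂ))⁻¹ • choiMatrix L

/-- The Choi state of a bipartite channel `N : A'B' → AB`, re-indexed across
the cut `R_A A : R_B B`. -/
def biChoiState {ιA' ιB' κA κB : Type} [Fintype ιA'] [DecidableEq ιA']
    [Fintype ιB'] [DecidableEq ιB'] (N : Mat (ιA' × ιB') →ₗ[ℂ] Mat (κA × κB)) :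
    Matrix ((ιA' × κA) × (ιB' × κB)) ((ιA' × κA) × (ιB' × κB)) ℂ :=
  Matrix.of fun p q =>
    choiState N ((p.1.1, p.2.1), (p.1.2, p.2.2)) ((q.1.1, q.2.1), (q.1.2, q.2.2))

/-- Conditional min-entropy of a bipartite channel:
`S_∞[A|B]_N := −inf over channels Q : B'→B of D_∞(Φ^N ‖ 1_{R_A A} ⊗ Φ^Q) − log₂|A'|`. -/
def chanCondMin {ιA' ιB' κA κB : Type}
    [Fintype ιA'] [DecidableEq ιA'] [Fintype ιB'] [DecidableEq ιB']
    [Fintype κA] [DecidableEq κA] [Fintype κB] [DecidableEq κB]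
    (N : Mat (ιA' × ιB') →ₗ[ℂ] Mat (κA × κB)) : EReal :=
  (-(⨅ Q : {Q : Mat ιB' →ₗ[ℂ] Mat κB // IsChannel Q},
      Dmax (biChoiState N) ((1 : Mat (ιA' × κA)) ⊗ₖ choiState Q.1)))
    - ((Real.logb 2 (Fintype.card ιA' : ℝ) : ℝ) : EReal)

/-- Rank-one projector `|v⟩⟨v|` associated with a vector. -/
def outer {ι : Type} (v : ι → ℂ) : Mat ι := Matrix.vecMulVec v (star v)

/-- Vectorization `vec(V) := ∑ i, e_i ⊗ V e_i` of a matrix `V : ℂ^ι → ℂ^κ`. -/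
def vecRect {ι κ : Type} (V : Matrix κ ι ℂ) : ι × κ → ℂ := fun p => V p.2 p.1

/-- A maximally entangled state on `ι1 × ι2`: `|φ⟩⟨φ|` with
`|φ⟩ = (1/√d) ∑ i, e_i ⊗ f_i` for orthonormal families `e`, `f`, `d = min(|ι1|,|ι2|)`. -/
def IsMaxEntangled {ι1 ι2 : Type} [Fintype ι1] [Fintype ι2]
    (Φ : Matrix (ι1 × ι2) (ι1 × ι2) ℂ) : Prop :=
  ∃ (e : Fin (min (Fintype.card ι1) (Fintype.card ι2)) → ι1 → ℂ)
    (f : Fin (min (Fintype.card ι1) (Fintype.card ι2)) → ι2 → ℂ),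
    (∀ i j, ∑ x : ι1, (starRingEnd ℂ) (e i x) * e j x = if i = j then 1 else 0) ∧
    (∀ i j, ∑ x : ι2, (starRingEnd ℂ) (f i x) * f j x = if i = j then 1 else 0) ∧
    Φ = outer (fun p => (((Real.sqrt (min (Fintype.card ι1) (Fintype.card ι2) : ℝ))⁻¹ : ℝ) : ℂ) *
      ∑ i, e i p.1 * f i p.2)

/-- Partial transpose over the second tensor factor. -/
def ptransposeSnd {ιA ιB : Type} (ρ : Matrix (ιA × ιB) (ιA × ιB) ℂ) :
    Matrix (ιA × ιB) (ιA × ιB) ℂ :=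
  Matrix.of fun p q => ρ (p.1, q.2) (q.1, p.2)

/-- A bipartite state is PPT if its partial transpose is positive semidefinite. -/
def IsPPT {ιA ιB : Type} [Fintype ιA] [Fintype ιB]
    (ρ : Matrix (ιA × ιB) (ιA × ιB) ℂ) : Prop :=
  (ptransposeSnd ρ).PosSemidef

/-- Conjugation channel `X ↦ W X Wᴴ`. -/
def conjMap {ι κ : Type} [Fintype ι] (W : Matrix κ ι ℂ) : Mat ι →ₗ[ℂ] Mat κ where
  toFun X := W * X * Wᴴ
  map_add' X Y := by simp [Matrix.mul_add, Matrix.add_mul]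
  map_smul' c X := by simp [Matrix.mul_smul, Matrix.smul_mul]

/-- The controlled unitary matrix `∑ j, |j⟩⟨j| ⊗ U_j`. -/
def ctrlU {n m : ℕ} (U : Fin n → Mat (Fin m)) : Mat (Fin n × Fin m) :=
  Matrix.of fun p q => (if p.1 = q.1 then 1 else 0) * U p.1 p.2 q.2

/-- The replacer channel `X ↦ tr(X) • γ`. -/
def replacer {ι κ : Type} [Fintype ι] (γ : Mat κ) : Mat ι →ₗ[ℂ] Mat κ where
  toFun X := X.trace • γ
  map_add' X Y := by simp [Matrix.trace_add, add_smul]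
  map_smul' c X := by simp [Matrix.trace_smul, mul_smul]

/-- The maximally mixed state `π_m = 1_m / m`. -/
def uniformState (m : ℕ) : Mat (Fin m) := ((m : ℂ))⁻¹ • (1 : Mat (Fin m))

/-- Tensor product of two linear maps of matrices. -/
def tensorL {ι1 κ1 ι2 κ2 : Type} [Fintype ι1] [DecidableEq ι1]
    (L1 : Mat ι1 →ₗ[ℂ] Mat κ1) (L2 : Mat ι2 →ₗ[ℂ] Mat κ2) :
    Mat (ι1 × ι2) →ₗ[ℂ] Mat (κ1 × κ2) where
  toFun X := Matrix.of fun p q =>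
    ∑ i1 : ι1, ∑ j1 : ι1,
      L1 (Matrix.single i1 j1 1) p.1 q.1 *
        L2 (Matrix.of fun i2 j2 => X (i1, i2) (j1, j2)) p.2 q.2
  map_add' X Y := by
    ext p q
    have h : ∀ i1 j1 : ι1,
        (Matrix.of fun i2 j2 => X (i1, i2) (j1, j2) + Y (i1, i2) (j1, j2)) =
          (Matrix.of fun i2 j2 => X (i1, i2) (j1, j2)) +
            (Matrix.of fun i2 j2 => Y (i1, i2) (j1, j2)) := by
      intro i1 j1; ext i2 j2; simp
    simp only [Matrix.add_apply, Matrix.of_apply, h, map_add, mul_add,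
      Finset.sum_add_distrib]
  map_smul' c X := by
    ext p q
    have h : ∀ i1 j1 : ι1,
        (Matrix.of fun i2 j2 => c * X (i1, i2) (j1, j2)) =
          c • (Matrix.of fun i2 j2 => X (i1, i2) (j1, j2)) := by
      intro i1 j1; ext i2 j2; simp
    simp only [Matrix.smul_apply, smul_eq_mul, Matrix.of_apply, RingHom.id_apply, h,
      LinearMap.map_smul]
    rw [Finset.mul_sum]
    refine Finset.sum_congr rfl fun i1 _ => ?_
    rw [Finset.mul_sum]
    refine Finset.sum_congr rfl fun j1 _ => ?_
    ring


/-- The square root of a positive semidefinite matrix, as `Matrix.PosSemidef.sqrt` was defined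
in Mathlib of December 2024 (removed since). -/
def Matrix.PosSemidef.sqrt {n : Type} [Fintype n] [DecidableEq n] {A : Matrix n n ℂ}
    (hA : A.PosSemidef) : Matrix n n ℂ :=
  hA.1.eigenvectorUnitary.1 * diagonal ((↑) ∘ (√·) ∘ hA.1.eigenvalues) *
    (star hA.1.eigenvectorUnitary : Matrix n n ℂ)

/-- Square root of a positive semidefinite matrix (junk value `0` otherwise). -/
def matSqrt {ι : Type} [Fintype ι] [DecidableEq ι] (M : Mat ι) : Mat ι :=
  letI := Classical.dec M.PosSemidef
  if h : M.PosSemidef then h.sqrt else 0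

/-- Trace norm `‖X‖₁ = tr √(XᴴX)`. -/
def traceNorm {ι : Type} [Fintype ι] [DecidableEq ι] (X : Mat ι) : ℝ :=
  (matSqrt (Xᴴ * X)).trace.re

/-- Fidelity `F(ρ,σ) = ‖√ρ√σ‖₁²`. -/
def fidelity {ι : Type} [Fintype ι] [DecidableEq ι] (ρ σ : Mat ι) : ℝ :=
  (traceNorm (matSqrt ρ * matSqrt σ)) ^ 2

/-- Purified distance `P(ρ,σ) = √(1 − F(ρ,σ))`. -/
def purifiedDist {ι : Type} [Fintype ι] [DecidableEq ι] (ρ σ : Mat ι) : ℝ :=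
  Real.sqrt (1 - fidelity ρ σ)

/-- Purified channel distance `P[N,M] = sup over states ψ of P((id⊗N)ψ, (id⊗M)ψ)`. -/
def purifiedChannelDist {ι κ : Type} [Fintype ι] [DecidableEq ι] [Fintype κ] [DecidableEq κ]
    (L1 L2 : Mat ι →ₗ[ℂ] Mat κ) : ℝ :=
  ⨆ ψ : {ψ : Matrix (ι × ι) (ι × ι) ℂ // IsState ψ},
    purifiedDist (tensorL (LinearMap.id : Mat ι →ₗ[ℂ] Mat ι) L1 ψ.1)
      (tensorL (LinearMap.id : Mat ι →ₗ[ℂ] Mat ι) L2 ψ.1)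

/-- Diamond norm `‖L‖◊ = sup over states ρ on R⊗in (R ≃ in) of ‖(id⊗L)ρ‖₁`. -/
def diamondNorm {ι κ : Type} [Fintype ι] [DecidableEq ι] [Fintype κ] [DecidableEq κ]
    (L : Mat ι →ₗ[ℂ] Mat κ) : ℝ :=
  ⨆ ρ : {ρ : Matrix (ι × ι) (ι × ι) ℂ // IsState ρ},
    traceNorm (tensorL (LinearMap.id : Mat ι →ₗ[ℂ] Mat ι) L ρ.1)

/-- `−log₂ t`, as an extended real which is `+∞` for `t ≤ 0`. -/
def negLogE (t : ℝ) : EReal := if t ≤ 0 then ⊤ else ((-Real.logb 2 t : ℝ) : EReal)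

/-- Hypothesis-testing relative entropy
`D_H^ε(ρ‖σ) = −log₂ inf{tr(Λσ) : 0 ≤ Λ ≤ 1, tr(Λρ) ≥ 1−ε}`. -/
def DH {ι : Type} [Fintype ι] [DecidableEq ι] (ε : ℝ) (ρ σ : Mat ι) : EReal :=
  negLogE (sInf {t : ℝ | ∃ Λ : Mat ι, Λ.PosSemidef ∧ ((1 : Mat ι) - Λ).PosSemidef ∧
    1 - ε ≤ ((Λ * ρ).trace).re ∧ t = ((Λ * σ).trace).re})

/-- Channel hypothesis-testing relative entropy
`D_H^ε[N‖M] = sup over states ψ of D_H^ε((id⊗N)ψ‖(id⊗M)ψ)`. -/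
def DHchan {ι κ : Type} [Fintype ι] [DecidableEq ι] [Fintype κ] [DecidableEq κ]
    (ε : ℝ) (L1 L2 : Mat ι →ₗ[ℂ] Mat κ) : EReal :=
  ⨆ ψ : {ψ : Matrix (ι × ι) (ι × ι) ℂ // IsState ψ},
    DH ε (tensorL (LinearMap.id : Mat ι →ₗ[ℂ] Mat ι) L1 ψ.1)
      (tensorL (LinearMap.id : Mat ι →ₗ[ℂ] Mat ι) L2 ψ.1)

/-- Channel max-relative entropy `D_∞[N‖M] = D_∞(Φ^N‖Φ^M)`. -/
def DmaxChan {ι κ : Type} [Fintype ι] [DecidableEq ι] [Fintype κ]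
    (L1 L2 : Mat ι →ₗ[ℂ] Mat κ) : EReal :=
  Dmax (choiState L1) (choiState L2)

/-- Smoothed channel max-relative entropy
`D_∞^ε[N‖M] = inf{D_∞[Ñ‖M] : Ñ a channel with (1/2)P[N,Ñ] ≤ ε}`. -/
def DmaxChanSmooth {ι κ : Type} [Fintype ι] [DecidableEq ι] [Fintype κ] [DecidableEq κ]
    (ε : ℝ) (L1 L2 : Mat ι →ₗ[ℂ] Mat κ) : EReal :=
  ⨅ Nt : {Nt : Mat ι →ₗ[ℂ] Mat κ //
      IsChannel Nt ∧ 2⁻¹ * purifiedChannelDist L1 Nt ≤ ε},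
    DmaxChan Nt.1 L2

/-- A quantum superchannel: `Θ(N) = post ∘ (id_E ⊗ N) ∘ pre` for channels `pre`, `post`
and a finite-dimensional memory `E`. -/
structure Superchannel (ι1 κ1 ι2 κ2 : Type) [Fintype ι1] [DecidableEq ι1]
    [Fintype κ1] [DecidableEq κ1] [Fintype ι2] [DecidableEq ι2]
    [Fintype κ2] [DecidableEq κ2] where
  e : ℕ
  pre : Mat ι2 →ₗ[ℂ] Mat (Fin e × ι1)
  post : Mat (Fin e × κ1) →ₗ[ℂ] Mat κ2
  pre_channel : IsChannel pre
  post_channel : IsChannel post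

/-- Action of a superchannel on a linear map. -/
def Superchannel.apply {ι1 κ1 ι2 κ2 : Type} [Fintype ι1] [DecidableEq ι1]
    [Fintype κ1] [DecidableEq κ1] [Fintype ι2] [DecidableEq ι2]
    [Fintype κ2] [DecidableEq κ2] (Θ : Superchannel ι1 κ1 ι2 κ2)
    (L : Mat ι1 →ₗ[ℂ] Mat κ1) : Mat ι2 →ₗ[ℂ] Mat κ2 :=
  Θ.post ∘ₗ (tensorL (LinearMap.id : Mat (Fin Θ.e) →ₗ[ℂ] Mat (Fin Θ.e)) L) ∘ₗ Θ.pre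


/-- A conditional Gibbs-preserving superchannel (distillation direction): it maps every
conditionally thermalizing channel `T^β ⊗ Q̃` to a conditionally uniformly mixing channel
`R^π_m ⊗ Q̃'` for some side channel `Q̃'`. -/
def IsCGPSdist {a' b' a b m d' d : ℕ} (γ : Mat (Fin a))
    (Θ : Superchannel (Fin a' × Fin b') (Fin a × Fin b) (Fin m × Fin d') (Fin m × Fin d)) :
    Prop :=
  ∀ Qt : Mat (Fin b') →ₗ[ℂ] Mat (Fin b), IsChannel Qt →
    ∃ Qt' : Mat (Fin d') →ₗ[ℂ] Mat (Fin d), IsChannel Qt' ∧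
      Θ.apply (tensorL (replacer γ) Qt) = tensorL (replacer (uniformState m)) Qt'

/-- A conditional Gibbs-preserving superchannel (formation direction): it maps every
conditionally uniformly mixing channel `R^π_m ⊗ Q̃` to a conditionally thermalizing channel
`T^β ⊗ Q̃'` for some side channel `Q̃'`. -/
def IsCGPScost {a' b' a b m d' d : ℕ} (γ : Mat (Fin a))
    (Θ : Superchannel (Fin m × Fin d') (Fin m × Fin d) (Fin a' × Fin b') (Fin a × Fin b)) :
    Prop :=
  ∀ Qt : Mat (Fin d') →ₗ[ℂ] Mat (Fin d), IsChannel Qt →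
    ∃ Qt' : Mat (Fin b') →ₗ[ℂ] Mat (Fin b), IsChannel Qt' ∧
      Θ.apply (tensorL (replacer (uniformState m)) Qt) = tensorL (replacer γ) Qt'

/-- One-shot conditional athermality distillation yield `Dist^{(1,ε)}(N, T^β)`:
the worst case over side channels `Q` of the largest `log₂ m` such that some conditional
Gibbs-preserving superchannel converts `(N, T^β⊗Q)` into `(id_m⊗Q', R^π_m⊗Q')`
within purified channel distance `ε`. -/
def DistOneShot {a' b' a b : ℕ} (N : Mat (Fin a' × Fin b') →ₗ[ℂ] Mat (Fin a × Fin b))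
    (γ : Mat (Fin a)) (ε : ℝ) : EReal :=
  ⨅ Q : {Q : Mat (Fin b') →ₗ[ℂ] Mat (Fin b) // IsChannel Q},
    sSup {x : EReal | ∃ m d' d : ℕ, ∃ Q' : Mat (Fin d') →ₗ[ℂ] Mat (Fin d),
      ∃ Θ : Superchannel (Fin a' × Fin b') (Fin a × Fin b) (Fin m × Fin d') (Fin m × Fin d),
        IsChannel Q' ∧ IsCGPSdist γ Θ ∧
        Θ.apply (tensorL (replacer γ) Q.1) = tensorL (replacer (uniformState m)) Q' ∧
        purifiedChannelDist
          (tensorL (LinearMap.id : Mat (Fin m) →ₗ[ℂ] Mat (Fin m)) Q') (Θ.apply N) ≤ ε ∧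
        x = ((Real.logb 2 (m : ℝ) : ℝ) : EReal)}

/-- One-shot conditional athermality formation cost `Cost^{(1,ε)}(N, T^β)`:
the best case over side channels `Q` of the least `log₂ m` such that some conditional
Gibbs-preserving superchannel converts `(id_m⊗Q'', R^π_m⊗Q'')` into `(N, T^β⊗Q)`
within purified channel distance `ε`. -/
def CostOneShot {a' b' a b : ℕ} (N : Mat (Fin a' × Fin b') →ₗ[ℂ] Mat (Fin a × Fin b))
    (γ : Mat (Fin a)) (ε : ℝ) : EReal :=
  ⨅ Q : {Q : Mat (Fin b') →ₗ[ℂ] Mat (Fin b) // IsChannel Q},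
    sInf {x : EReal | ∃ m d' d : ℕ, ∃ Q'' : Mat (Fin d') →ₗ[ℂ] Mat (Fin d),
      ∃ Θ : Superchannel (Fin m × Fin d') (Fin m × Fin d) (Fin a' × Fin b') (Fin a × Fin b),
        IsChannel Q'' ∧ IsCGPScost γ Θ ∧
        Θ.apply (tensorL (replacer (uniformState m)) Q'') = tensorL (replacer γ) Q.1 ∧
        purifiedChannelDist N
          (Θ.apply (tensorL (LinearMap.id : Mat (Fin m) →ₗ[ℂ] Mat (Fin m)) Q'')) ≤ ε ∧
        x = ((Real.logb 2 (m : ℝ) : ℝ) : EReal)}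


/-- A bipartite channel `N : A'B' → AB` is no-signaling (semicausal) from `A'` to `B`:
`tr_A ∘ N = tr_{A'} ⊗ Q` for some channel `Q : B' → B`. -/
def NoSignalFstToSnd {ιA' ιB' κA κB : Type} [Fintype ιA'] [DecidableEq ιA']
    [Fintype ιB'] [DecidableEq ιB'] [Fintype κA] [Fintype κB]
    (N : Mat (ιA' × ιB') →ₗ[ℂ] Mat (κA × κB)) : Prop :=
  ∃ Q : Mat ιB' →ₗ[ℂ] Mat κB, IsChannel Q ∧
    ∀ X : Mat (ιA' × ιB'), trFst (N X) = Q (trFst X)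

end

-- auxiliary
noncomputable def Wm : Mat (Fin 2 × Fin 2) :=
  Matrix.of fun p q => if p.1 ≠ q.1 ∧ p.2 ≠ q.2 then (if p.1 = p.2 then -1 else 1) else 0

lemma Wm_mul_Wm : Wm * Wm = 1 := by
  ext ⟨i,j⟩ ⟨k,l⟩
  fin_cases i <;> fin_cases j <;> fin_cases k <;> fin_cases l <;>
    simp [Wm, Matrix.mul_apply, Fintype.sum_prod_type, Fin.sum_univ_two, Matrix.one_apply,
      Prod.ext_iff]

lemma Wm_herm : Wmᴴ = Wm := by
  ext ⟨i,j⟩ ⟨k,l⟩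
  fin_cases i <;> fin_cases j <;> fin_cases k <;> fin_cases l <;>
    simp [Wm, Matrix.conjTranspose_apply]

lemma lemA (M : Mat (Fin 2 × Fin 2)) (c : ℂ)
    (hF : ∀ b b' : Fin 2, M (0,b) (0,b') + M (1,b) (1,b') = if b = b' then c else 0)
    (hS : ∀ j j' : Fin 2, M (j,0) (j',0) + M (j,1) (j',1) = if j = j' then c else 0) :
    Wm * Mᵀ * Wm = M := by
  have h00 := hF 0 0; have h01 := hF 0 1; have h10 := hF 1 0; have h11 := hF 1 1
  have g00 := hS 0 0; have g01 := hS 0 1; have g10 := hS 1 0; have g11 := hS 1 1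
  simp only [if_true, if_false, show ((0:Fin 2) = 0) = True from by simp,
    show ((0:Fin 2) = 1) = False from by simp, show ((1:Fin 2) = 0) = False from by simp,
    show ((1:Fin 2) = 1) = True from by simp, ite_true, ite_false] at *
  ext ⟨j,b⟩ ⟨j',b'⟩
  fin_cases j <;> fin_cases b <;> fin_cases j' <;> fin_cases b' <;>
    · simp only [Matrix.mul_apply, Fintype.sum_prod_type, Fin.sum_univ_two, Wm,
        Matrix.transpose_apply, Matrix.of_apply]
      try norm_num
      try simp only [← Prod.mk_zero_zero, ← Prod.mk_one_one]
      try first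
      | linear_combination g11 - h00
      | linear_combination h00 - g11
      | linear_combination g00 - h00
      | linear_combination h00 - g00
      | linear_combination -h01
      | linear_combination -h10
      | linear_combination -g01
      | linear_combination -g10

lemma lemB (S : Mat (Fin 2 × Fin 2)) (h : Wm * Sᵀ * Wm = S) :
    trFst S = (S.trace/2) • (1 : Mat (Fin 2)) ∧ trSnd S = (S.trace/2) • (1 : Mat (Fin 2)) := by
  have e : ∀ p q : Fin 2 × Fin 2, (Wm * Sᵀ * Wm) p q = S p q := fun p q =>
    congrFun (congrFun h p) q
  have k1 := e (0,0) (0,0)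
  have k2 := e (1,0) (1,0)
  have k3 := e (0,0) (0,1)
  have k4 := e (0,0) (1,0)
  have k5 := e (0,1) (0,0)
  have k6 := e (1,0) (0,0)
  simp only [Matrix.mul_apply, Fintype.sum_prod_type, Fin.sum_univ_two, Wm,
    Matrix.transpose_apply, Matrix.of_apply] at k1 k2 k3 k4 k5 k6
  norm_num at k1 k2 k3 k4 k5 k6
  constructor <;>
    · ext b b'
      fin_cases b <;> fin_cases b' <;>
        · simp only [trFst, trSnd, Matrix.trace, Matrix.diag, Matrix.smul_apply,
            Matrix.one_apply, Fintype.sum_prod_type, Fin.sum_univ_two, Matrix.of_apply,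
            smul_eq_mul]
          try norm_num
          try simp only [← Prod.mk_zero_zero, ← Prod.mk_one_one]
          first
          | linear_combination (-k1 - k2)/2
          | linear_combination (k1 + k2)/2
          | linear_combination (k1 - k2)/2
          | linear_combination (k2 - k1)/2
          | linear_combination -k3
          | linear_combination -k4
          | linear_combination -k5
          | linear_combination -k6

lemma conj_std {n : Type} [Fintype n] [DecidableEq n] (U : Matrix n n ℂ) (r s p q : n) :
    (U * Matrix.single r s (1:ℂ) * Uᴴ) p q = U p r * (starRingEnd ℂ) (U q s) := by
  rw [Matrix.mul_assoc, Matrix.mul_apply]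
  rw [Finset.sum_eq_single r]
  · rw [Matrix.single_mul_apply_same, one_mul, Matrix.conjTranspose_apply]
    rfl
  · intro x _ hx
    rw [Matrix.single_mul_apply_of_ne 1 r s x q hx, mul_zero]
  · simp


section
open scoped MatrixOrder

lemma psd_sqrt_eq_cfc {ι : Type} [Fintype ι] [DecidableEq ι] {A : Mat ι} (hA : A.PosSemidef) :
    hA.sqrt = CFC.sqrt A := by
  rw [CFC.sqrt_eq_real_sqrt A hA.nonneg, cfcₙ_eq_cfc, hA.1.cfc_eq]
  simp [Matrix.IsHermitian.cfc, Matrix.PosSemidef.sqrt, Function.comp_def]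

lemma psd_posSemidef_sqrt {ι : Type} [Fintype ι] [DecidableEq ι] {A : Mat ι}
    (hA : A.PosSemidef) : hA.sqrt.PosSemidef := by
  rw [psd_sqrt_eq_cfc]; exact (CFC.sqrt_nonneg A).posSemidef

lemma psd_sqrt_mul_self {ι : Type} [Fintype ι] [DecidableEq ι] {A : Mat ι}
    (hA : A.PosSemidef) : hA.sqrt * hA.sqrt = A := by
  rw [psd_sqrt_eq_cfc]; exact CFC.sqrt_mul_sqrt_self A hA.nonneg

lemma psd_eq_sqrt_of_sq_eq {ι : Type} [Fintype ι] [DecidableEq ι] {A B : Mat ι}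
    (hB : B.PosSemidef) (hA : A.PosSemidef) (h : B ^ 2 = A) : B = hA.sqrt := by
  rw [psd_sqrt_eq_cfc]; subst h; rw [CFC.sqrt_sq B hB.nonneg]

end

/-- For a two-qubit unitary channel with Choi state `Φ^U` and reduced
state `M = tr_{R_AA} Φ^U` on `R_B ⊗ B`, the square root `√M` has both partial traces
proportional to the identity: `tr_{R_B}(√M) = (tr√M/2)·1₂` and `tr_B(√M) = (tr√M/2)·1₂`
(i.e. `√M/tr√M` is the Choi state of a unital qubit channel). -/
theorem two_qubit_unitary_choi_reduced_sqrt_unital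
    (U : Mat (Fin 2 × Fin 2)) (hU : U ∈ Matrix.unitaryGroup (Fin 2 × Fin 2) ℂ) :
    trFst (matSqrt (trFst (biChoiState (conjMap U)))) =
        ((matSqrt (trFst (biChoiState (conjMap U)))).trace / 2) • (1 : Mat (Fin 2)) ∧
    trSnd (matSqrt (trFst (biChoiState (conjMap U)))) =
        ((matSqrt (trFst (biChoiState (conjMap U)))).trace / 2) • (1 : Mat (Fin 2)) := by
  set M : Mat (Fin 2 × Fin 2) := trFst (biChoiState (conjMap U)) with hMdef
  -- entry formula for M
  have hME : ∀ j b j' b' : Fin 2, M (j,b) (j',b') =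
      ∑ i : Fin 2, ∑ a : Fin 2,
        (4:ℂ)⁻¹ * (U (a,b) (i,j) * (starRingEnd ℂ) (U (a,b') (i,j'))) := by
    intro j b j' b'
    show (trFst (biChoiState (conjMap U))) (j,b) (j',b') = _
    simp only [trFst, biChoiState, choiState, choiMatrix, conjMap, Matrix.of_apply,
      Matrix.smul_apply, LinearMap.coe_mk, AddHom.coe_mk, smul_eq_mul, conj_std,
      Fintype.sum_prod_type, Fintype.card_prod, Fintype.card_fin]
    norm_num
  -- M is PSD
  have hMA : M = ((Matrix.of fun p q : Fin 2 × Fin 2 =>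
      (2:ℂ)⁻¹ * (starRingEnd ℂ) (U (p.2, q.2) (p.1, q.1)))ᴴ *
      (Matrix.of fun p q : Fin 2 × Fin 2 =>
      (2:ℂ)⁻¹ * (starRingEnd ℂ) (U (p.2, q.2) (p.1, q.1)))) := by
    ext ⟨j,b⟩ ⟨j',b'⟩
    rw [hME]
    simp only [Matrix.mul_apply, Matrix.conjTranspose_apply, Matrix.of_apply,
      Fintype.sum_prod_type, Complex.star_def, _root_.map_mul, map_inv₀,
      Complex.conj_conj, map_ofNat]
    refine Finset.sum_congr rfl fun i _ => Finset.sum_congr rfl fun a _ => ?_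
    ring
  have hMpsd : M.PosSemidef := by
    rw [hMA]; exact Matrix.posSemidef_conjTranspose_mul_self _
  -- marginals of M
  have hU1 : U * Uᴴ = 1 := by
    simpa [Matrix.star_eq_conjTranspose] using Matrix.mem_unitaryGroup_iff.mp hU
  have hU2 : Uᴴ * U = 1 := by
    simpa [Matrix.star_eq_conjTranspose] using Matrix.mem_unitaryGroup_iff'.mp hU
  have hF : ∀ b b' : Fin 2, M (0,b) (0,b') + M (1,b) (1,b') =
      if b = b' then (2:ℂ)⁻¹ else 0 := by
    intro b b'
    have e0 := congrFun (congrFun hU1 ((0:Fin 2),b)) ((0:Fin 2),b')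
    have e1 := congrFun (congrFun hU1 ((1:Fin 2),b)) ((1:Fin 2),b')
    simp only [Matrix.mul_apply, Matrix.conjTranspose_apply, Matrix.one_apply,
      Fintype.sum_prod_type, Fin.sum_univ_two, Prod.mk.injEq, true_and,
      Complex.star_def] at e0 e1
    rw [hME, hME]
    simp only [Fin.sum_univ_two]
    by_cases hbb : b = b'
    · simp only [hbb, if_true, ite_true] at *
      linear_combination (e0 + e1)/4
    · simp only [hbb, if_false, ite_false] at *
      linear_combination (e0 + e1)/4
  have hG : ∀ j j' : Fin 2, M (j,0) (j',0) + M (j,1) (j',1) =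
      if j = j' then (2:ℂ)⁻¹ else 0 := by
    intro j j'
    have e0 := congrFun (congrFun hU2 ((0:Fin 2),j')) ((0:Fin 2),j)
    have e1 := congrFun (congrFun hU2 ((1:Fin 2),j')) ((1:Fin 2),j)
    simp only [Matrix.mul_apply, Matrix.conjTranspose_apply, Matrix.one_apply,
      Fintype.sum_prod_type, Fin.sum_univ_two, Prod.mk.injEq, true_and,
      Complex.star_def] at e0 e1
    rw [hME, hME]
    simp only [Fin.sum_univ_two]
    by_cases hjj : j = j'
    · subst hjj
      simp only [if_true, ite_true, if_pos rfl] at *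
      linear_combination (e0 + e1)/4
    · have hjj' : ¬ (j' = j) := fun h => hjj h.symm
      simp only [hjj, hjj', if_false, ite_false] at *
      linear_combination (e0 + e1)/4
  -- the square root
  have hms : matSqrt M = hMpsd.sqrt := by
    unfold matSqrt
    exact dif_pos hMpsd
  have hWM : Wm * Mᵀ * Wm = M := lemA M 2⁻¹ hF hG
  set S : Mat (Fin 2 × Fin 2) := hMpsd.sqrt with hSdef
  have hSpsd : S.PosSemidef := psd_posSemidef_sqrt hMpsd
  have hT : (Wm * Sᵀ * Wm).PosSemidef := by
    have := (hSpsd.transpose).mul_mul_conjTranspose_same Wm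
    rwa [Wm_herm] at this
  have hTsq : (Wm * Sᵀ * Wm) ^ 2 = M := by
    rw [pow_two]
    calc (Wm * Sᵀ * Wm) * (Wm * Sᵀ * Wm)
        = Wm * (Sᵀ * ((Wm * Wm) * (Sᵀ * Wm))) := by simp only [Matrix.mul_assoc]
      _ = Wm * (Sᵀ * (Sᵀ * Wm)) := by rw [Wm_mul_Wm, Matrix.one_mul]
      _ = Wm * ((S * S)ᵀ * Wm) := by rw [Matrix.transpose_mul, Matrix.mul_assoc]
      _ = Wm * (Mᵀ * Wm) := by rw [psd_sqrt_mul_self hMpsd]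
      _ = Wm * Mᵀ * Wm := by rw [Matrix.mul_assoc]
      _ = M := hWM
  have hWS : Wm * Sᵀ * Wm = S := psd_eq_sqrt_of_sq_eq hT hMpsd hTsq
  have := lemB S hWS
  rw [hms]
  exact this
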